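/- Fix T > 0 and a continuous, strictly increasing function ζ : [0,T] → ℝ. For a continuous function f : [0,T] → ℝ define the running minimum m_f(t) = inf_{s ∈ [0,t]} f(s) and the endogenous burst time τ̄(f) = inf{ t ∈ [0,T] : m_f(t) ≤ ζ(t) } ∧ T, with the convention that τ̄(f) = T when the set { t ∈ [0,T] : m_f(t) ≤ ζ(t) } is empty. Then τ̄ is sequentially continuous on C([0,T],ℝ) with respect to the supremum norm: whenever f_n → f uniformly on [0,T], one has τ̄(f_n) → τ̄(f). -/

import Mathlib

/-- The running minimum `m_f(t) = inf_{s ∈ [0,t]} f(s)`. -/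
noncomputable def runMin (f : ℝ → ℝ) (t : ℝ) : ℝ := sInf (f '' Set.Icc 0 t)

open Classical in
/-- The endogenous burst time `τ̄(f) = inf{t ∈ [0,T] : m_f(t) ≤ ζ(t)} ∧ T`,
with the convention that it equals `T` when the set is empty. -/
noncomputable def burstTime (T : ℝ) (ζ : ℝ → ℝ) (f : ℝ → ℝ) : ℝ :=
  if ({t : ℝ | t ∈ Set.Icc 0 T ∧ runMin f t ≤ ζ t}).Nonempty then
    min (sInf {t : ℝ | t ∈ Set.Icc 0 T ∧ runMin f t ≤ ζ t}) T
  else T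

open Set Filter

lemma runMin_nonempty (f : ℝ → ℝ) {t : ℝ} (ht : 0 ≤ t) : (f '' Icc 0 t).Nonempty :=
  ⟨f 0, 0, ⟨le_refl 0, ht⟩, rfl⟩

lemma runMin_bdd {f : ℝ → ℝ} {T t : ℝ} (hf : ContinuousOn f (Icc 0 T)) (htT : t ≤ T) :
    BddBelow (f '' Icc 0 t) :=
  ((isCompact_Icc.image_of_continuousOn (hf.mono (Icc_subset_Icc_right htT))).bddBelow)

lemma runMin_anti {f : ℝ → ℝ} {T s t : ℝ} (hf : ContinuousOn f (Icc 0 T))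
    (hs : 0 ≤ s) (hst : s ≤ t) (htT : t ≤ T) : runMin f t ≤ runMin f s :=
  csInf_le_csInf (runMin_bdd hf htT) (runMin_nonempty f hs)
    (image_mono (Icc_subset_Icc_right hst))

lemma runMin_le_apply {f : ℝ → ℝ} {T s t : ℝ} (hf : ContinuousOn f (Icc 0 T))
    (htT : t ≤ T) (hs : s ∈ Icc 0 t) : runMin f t ≤ f s :=
  csInf_le (runMin_bdd hf htT) ⟨s, hs, rfl⟩

lemma runMin_close {f g : ℝ → ℝ} {T t d : ℝ} (hf : ContinuousOn f (Icc 0 T))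
    (ht : 0 ≤ t) (htT : t ≤ T) (h : ∀ s ∈ Icc 0 t, f s ≤ g s + d) :
    runMin f t ≤ runMin g t + d := by
  have h1 : runMin f t - d ≤ runMin g t := by
    apply le_csInf (runMin_nonempty g ht)
    rintro b ⟨s, hs, rfl⟩
    have h2 := runMin_le_apply hf htT hs
    linarith [h s hs]
  linarith

/-- If the threshold `ζ` is continuous and strictly increasing on `[0,T]`, the endogenous
burst time functional is sequentially continuous for uniform convergence on `[0,T]`. -/
theorem stmt1 (T : ℝ) (hT : 0 < T) (ζ : ℝ → ℝ)
    (hζc : ContinuousOn ζ (Set.Icc 0 T)) (hζm : StrictMonoOn ζ (Set.Icc 0 T))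
    (f : ℕ → ℝ → ℝ) (g : ℝ → ℝ)
    (hf : ∀ n, ContinuousOn (f n) (Set.Icc 0 T)) (hg : ContinuousOn g (Set.Icc 0 T))
    (hconv : TendstoUniformlyOn f g Filter.atTop (Set.Icc 0 T)) :
    Filter.Tendsto (fun n => burstTime T ζ (f n)) Filter.atTop (nhds (burstTime T ζ g)) := by
  have hconv' := Metric.tendstoUniformlyOn_iff.mp hconv
  -- burstTime is always in [0, T]
  have hbt_le : ∀ h : ℝ → ℝ, burstTime T ζ h ≤ T := by
    intro h
    unfold burstTime
    split
    · exact min_le_right _ _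
    · exact le_refl T
  have hbt_nonneg : ∀ h : ℝ → ℝ, 0 ≤ burstTime T ζ h := by
    intro h
    unfold burstTime
    split
    · rename_i hne
      exact le_min (le_csInf hne (fun t ht => ht.1.1)) hT.le
    · exact hT.le
  by_cases hne : ({t : ℝ | t ∈ Set.Icc 0 T ∧ runMin g t ≤ ζ t}).Nonempty
  · -- nonempty case
    set τ := sInf {t : ℝ | t ∈ Set.Icc 0 T ∧ runMin g t ≤ ζ t} with hτdef
    obtain ⟨t₀, ht₀⟩ := hne
    have hbdd : BddBelow {t : ℝ | t ∈ Set.Icc 0 T ∧ runMin g t ≤ ζ t} :=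
      ⟨0, fun t ht => ht.1.1⟩
    have hτ0 : 0 ≤ τ := le_csInf ⟨t₀, ht₀⟩ (fun t ht => ht.1.1)
    have hτT : τ ≤ T := le_trans (csInf_le hbdd ht₀) ht₀.1.2
    have hgτ : burstTime T ζ g = τ := by
      unfold burstTime
      rw [if_pos ⟨t₀, ht₀⟩, min_eq_left hτT]
    rw [hgτ, Metric.tendsto_nhds]
    intro ε hε
    -- Upper bound: eventually burstTime T ζ (f n) < τ + ε
    have hupper : ∀ᶠ n in atTop, burstTime T ζ (f n) < τ + ε := by
      by_cases hcase : τ + ε / 2 ≤ T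
      · set t₁ := τ + ε / 2 with ht₁def
        have ht₁mem : t₁ ∈ Icc 0 T := ⟨by rw [ht₁def]; linarith, hcase⟩
        obtain ⟨t, htS, htlt⟩ := exists_lt_of_csInf_lt ⟨t₀, ht₀⟩
          (show τ < t₁ by rw [ht₁def]; linarith)
        have h1 : runMin g t₁ < ζ t₁ := by
          calc runMin g t₁ ≤ runMin g t := runMin_anti hg htS.1.1 htlt.le hcase
            _ ≤ ζ t := htS.2
            _ < ζ t₁ := hζm htS.1 ht₁mem htlt
        set δ₁ := ζ t₁ - runMin g t₁ with hδ₁def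
        have hδ₁pos : 0 < δ₁ := by rw [hδ₁def]; linarith
        filter_upwards [hconv' δ₁ hδ₁pos] with n hn
        have hmem : t₁ ∈ {t : ℝ | t ∈ Set.Icc 0 T ∧ runMin (f n) t ≤ ζ t} := by
          refine ⟨ht₁mem, ?_⟩
          have : runMin (f n) t₁ ≤ runMin g t₁ + δ₁ := by
            apply runMin_close (hf n) ht₁mem.1 ht₁mem.2
            intro s hs
            have hsT : s ∈ Icc 0 T := ⟨hs.1, le_trans hs.2 ht₁mem.2⟩
            have := hn s hsT
            rw [Real.dist_eq] at this
            have := abs_lt.mp this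
            linarith [this.1, this.2]
          rw [hδ₁def] at this
          linarith
        have hne' : ({t : ℝ | t ∈ Set.Icc 0 T ∧ runMin (f n) t ≤ ζ t}).Nonempty := ⟨t₁, hmem⟩
        have : burstTime T ζ (f n) ≤ t₁ := by
          unfold burstTime
          rw [if_pos hne']
          exact le_trans (min_le_left _ _) (csInf_le ⟨0, fun s hs => hs.1.1⟩ hmem)
        rw [ht₁def] at this
        linarith
      · push_neg at hcase
        filter_upwards with n
        exact lt_of_le_of_lt (hbt_le (f n)) (by linarith)
    -- Lower bound: eventually τ - ε < burstTime T ζ (f n)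
    have hlower : ∀ᶠ n in atTop, τ - ε < burstTime T ζ (f n) := by
      by_cases hcase : ε / 2 ≤ τ
      · set t₂ := τ - ε / 2 with ht₂def
        have ht₂mem : t₂ ∈ Icc 0 T := ⟨by rw [ht₂def]; linarith, by rw [ht₂def]; linarith⟩
        have ht₂notin : t₂ ∉ {t : ℝ | t ∈ Set.Icc 0 T ∧ runMin g t ≤ ζ t} := by
          intro hmem
          have := csInf_le hbdd hmem
          rw [← hτdef] at this
          rw [ht₂def] at this
          linarith
        have h2 : ζ t₂ < runMin g t₂ := by
          by_contra hc
          push_neg at hc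
          exact ht₂notin ⟨ht₂mem, hc⟩
        set δ₂ := runMin g t₂ - ζ t₂ with hδ₂def
        have hδ₂pos : 0 < δ₂ := by rw [hδ₂def]; linarith
        filter_upwards [hconv' (δ₂ / 2) (by linarith)] with n hn
        -- every element of the burst set of f n exceeds t₂
        have hkey : ∀ t ∈ {t : ℝ | t ∈ Set.Icc 0 T ∧ runMin (f n) t ≤ ζ t}, t₂ ≤ t := by
          rintro t ⟨htmem, htle⟩
          by_contra hc
          push_neg at hc
          have hζle : ζ t ≤ ζ t₂ := hζm.monotoneOn htmem ht₂mem hc.le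
          have hanti : runMin g t₂ ≤ runMin g t := runMin_anti hg htmem.1 hc.le ht₂mem.2
          have hclose : runMin g t ≤ runMin (f n) t + δ₂ / 2 := by
            apply runMin_close hg htmem.1 htmem.2
            intro s hs
            have hsT : s ∈ Icc 0 T := ⟨hs.1, le_trans hs.2 htmem.2⟩
            have := hn s hsT
            rw [Real.dist_eq] at this
            have := abs_lt.mp this
            linarith [this.1, this.2]
          rw [hδ₂def] at hclose
          linarith
        have : t₂ ≤ burstTime T ζ (f n) := by
          unfold burstTime
          split
          · rename_i hne'
            exact le_min (le_csInf hne' hkey) ht₂mem.2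
          · exact ht₂mem.2
        rw [ht₂def] at this
        linarith
      · push_neg at hcase
        filter_upwards with n
        exact lt_of_lt_of_le (by linarith) (hbt_nonneg (f n))
    filter_upwards [hupper, hlower] with n h1 h2
    rw [Real.dist_eq, abs_lt]
    constructor <;> linarith
  · -- empty case: burstTime g = T and eventually burstTime (f n) = T
    have hgT : burstTime T ζ g = T := by
      unfold burstTime
      rw [if_neg hne]
    have hδ : ζ T < runMin g T := by
      by_contra hc
      push_neg at hc
      exact hne ⟨T, ⟨hT.le, le_refl T⟩, hc⟩
    set δ := runMin g T - ζ T with hδdef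
    have hδpos : 0 < δ := by rw [hδdef]; linarith
    rw [hgT]
    apply Tendsto.congr' ?_ tendsto_const_nhds
    filter_upwards [hconv' (δ / 2) (by linarith)] with n hn
    have hempty : ¬ ({t : ℝ | t ∈ Set.Icc 0 T ∧ runMin (f n) t ≤ ζ t}).Nonempty := by
      rintro ⟨t, ⟨ht0, htT⟩, hle⟩
      have hclose : runMin g t ≤ runMin (f n) t + δ / 2 := by
        apply runMin_close hg ht0 htT
        intro s hs
        have hsT : s ∈ Icc 0 T := ⟨hs.1, le_trans hs.2 htT⟩
        have := hn s hsT
        rw [Real.dist_eq] at this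
        have := abs_lt.mp this
        linarith [this.1, this.2]
      have hanti : runMin g T ≤ runMin g t := runMin_anti hg ht0 htT le_rfl
      have hζle : ζ t ≤ ζ T := hζm.monotoneOn ⟨ht0, htT⟩ ⟨hT.le, le_rfl⟩ htT
      rw [hδdef] at hclose
      linarith
    show T = burstTime T ζ (f n)
    unfold burstTime
    rw [if_neg hempty]
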